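/- Suppose C is a coloring of the d-element subsets of ℕ with k colors such that every C-homogeneous set is finite. Then the function F : Finset ℕ → ℕ defined by F(X) = |X| + 1 if X is C-homogeneous and F(X) = 0 otherwise, is asymptotically stable. -/
import Mathlib


/-- `H` is homogeneous for the colouring `C` of `d`-element finite sets:
`C` is constant on the `d`-element subsets of `H`. -/
def HomogF (k d : ℕ) (C : Finset ℕ → Fin k) (H : Finset ℕ) : Prop :=
  ∃ c : Fin k, ∀ s : Finset ℕ, s ⊆ H → s.card = d → C s = c

/-- Homogeneity for a (possibly infinite) set `H ⊆ ℕ`. -/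
def HomogS (k d : ℕ) (C : Finset ℕ → Fin k) (H : Set ℕ) : Prop :=
  ∃ c : Fin k, ∀ s : Finset ℕ, ↑s ⊆ H → s.card = d → C s = c

/-- `F` is asymptotically stable: on every increasing chain of finite sets
the value of `F` eventually stabilises. -/
def AsympStable (F : Finset ℕ → ℕ) : Prop :=
  ∀ X : ℕ → Finset ℕ, (∀ i, X i ⊆ X (i + 1)) →
    ∃ i, ∀ j, i ≤ j → F (X j) = F (X i)

theorem counterexample_is_asymp_stable (d k : ℕ) (C : Finset ℕ → Fin k)
    (hC : ∀ H : Set ℕ, HomogS k d C H → H.Finite)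
    (F : Finset ℕ → ℕ)
    (hF : ∀ X : Finset ℕ,
      (HomogF k d C X → F X = X.card + 1) ∧ (¬ HomogF k d C X → F X = 0)) :
    AsympStable F := by
  classical
  intro X hX
  have hm : Monotone X := monotone_nat_of_le_succ hX
  by_cases h : ∀ i, HomogF k d C (X i)
  · -- all homogeneous: union is homogeneous, hence finite
    set H : Set ℕ := ⋃ i, (X i : Set ℕ) with hHdef
    have exists_subset : ∀ s : Finset ℕ, ↑s ⊆ H → ∃ i, s ⊆ X i := by
      intro s
      induction s using Finset.induction with
      | empty => exact fun _ => ⟨0, by simp⟩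
      | @insert a s ha ih =>
        intro hsub
        rw [Finset.coe_insert, Set.insert_subset_iff] at hsub
        obtain ⟨i, hi⟩ := ih hsub.2
        obtain ⟨j, hj⟩ := Set.mem_iUnion.1 hsub.1
        refine ⟨max i j, Finset.insert_subset (hm (le_max_right i j) hj) (hi.trans (hm (le_max_left i j)))⟩
    have hHomS : HomogS k d C H := by
      by_cases hs : ∃ s : Finset ℕ, ↑s ⊆ H ∧ s.card = d
      · obtain ⟨s₀, hs₀H, hs₀c⟩ := hs
        obtain ⟨i₀, hi₀⟩ := exists_subset s₀ hs₀H
        refine ⟨C s₀, ?_⟩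
        intro s hsH hsc
        obtain ⟨i, hi⟩ := exists_subset s hsH
        obtain ⟨c, hc⟩ := h (max i i₀)
        rw [hc s (hi.trans (hm (le_max_left _ _))) hsc,
          hc s₀ (hi₀.trans (hm (le_max_right _ _))) hs₀c]
      · obtain ⟨c, _⟩ := h 0
        exact ⟨c, fun s hsH hsc => absurd ⟨s, hsH, hsc⟩ hs⟩
    have hfin := hC H hHomS
    set B := hfin.toFinset.card with hBdef
    have hbound : ∀ i, (X i).card ≤ B := by
      intro i
      refine Finset.card_le_card ?_
      intro x hx
      rw [Set.Finite.mem_toFinset]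
      exact Set.mem_iUnion.2 ⟨i, hx⟩
    set S : Finset ℕ := (Finset.range (B + 1)).filter (fun n => ∃ i, (X i).card = n) with hSdef
    have hSne : S.Nonempty := ⟨(X 0).card, by
      simp only [hSdef, Finset.mem_filter, Finset.mem_range]
      exact ⟨Nat.lt_succ_of_le (hbound 0), 0, rfl⟩⟩
    have hmax := S.max'_mem hSne
    simp only [hSdef, Finset.mem_filter, Finset.mem_range] at hmax
    obtain ⟨i, hi⟩ := hmax.2
    refine ⟨i, fun j hij => ?_⟩
    have hle : (X j).card ≤ S.max' hSne := by
      refine S.le_max' _ ?_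
      simp only [hSdef, Finset.mem_filter, Finset.mem_range]
      exact ⟨Nat.lt_succ_of_le (hbound j), j, rfl⟩
    have hcard : (X j).card = (X i).card :=
      le_antisymm (hi ▸ hle) (Finset.card_le_card (hm hij))
    rw [(hF (X j)).1 (h j), (hF (X i)).1 (h i), hcard]
  · push_neg at h
    obtain ⟨i, hi⟩ := h
    refine ⟨i, fun j hij => ?_⟩
    have hj : ¬ HomogF k d C (X j) := fun ⟨c, hc⟩ =>
      hi ⟨c, fun s hs hcard => hc s (hs.trans (hm hij)) hcard⟩
    rw [(hF (X j)).2 hj, (hF (X i)).2 hi]
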